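/- Let A ∈ ℝ^{m×n} (m ≥ n), b ∈ ℝ^m, μ ∈ ℝ^n, let R ∈ ℝ^{m×m} and Q ∈ ℝ^{n×n} be symmetric positive definite, and let λ ∈ ℝ. Suppose U_R ∈ ℝ^{m×m} with U_Rᵀ R⁻¹ U_R = I_m, V_Q ∈ ℝ^{n×n} with V_Qᵀ Q⁻¹ V_Q = I_n, and U_R⁻¹ A V_Q = Σ where Σ ∈ ℝ^{m×n} has Σ_{ij} = 0 for i ≠ j and diagonal entries σ̂_1, ..., σ̂_n > 0. Set g = U_Rᵀ R⁻¹ b and let Σ† denote the Moore–Penrose pseudoinverse of Σ. Then for every k ≥ 1 and every x_k ∈ K_k(Aᵀ R⁻¹ A Q + λ² I_n, Aᵀ R⁻¹ b), there exists a polynomial P of degree at most k−1 such that μ + Q x_k = μ + V_Q Φ_k Σ† g, where Φ_k = P(Σᵀ Σ + λ² I_n) Σᵀ Σ; i.e., every gen-LSQR iterate is a filtered GSVD solution. -/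

import Mathlib

open Matrix

/-- The `k`-dimensional Krylov subspace `K_k(C, g) = span {g, Cg, ..., C^(k-1) g}`. -/
def krylov {n : ℕ} (C : Matrix (Fin n) (Fin n) ℝ) (g : Fin n → ℝ) (k : ℕ) :
    Submodule ℝ (Fin n → ℝ) :=
  Submodule.span ℝ (Set.range fun q : Fin k => (C ^ (q : ℕ)) *ᵥ g)

theorem stmt_19 {m n : ℕ} (hmn : n ≤ m) (A : Matrix (Fin m) (Fin n) ℝ)
    (b : Fin m → ℝ) (μ : Fin n → ℝ)
    (R UR : Matrix (Fin m) (Fin m) ℝ) (Q VQ : Matrix (Fin n) (Fin n) ℝ)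
    (Sg : Matrix (Fin m) (Fin n) ℝ)
    (hR : R.PosDef) (hQ : Q.PosDef) (lam : ℝ)
    (hURu : IsUnit UR) (hVQu : IsUnit VQ)
    (hUR : URᵀ * R⁻¹ * UR = 1) (hVQ : VQᵀ * Q⁻¹ * VQ = 1)
    (hGSVD : UR⁻¹ * A * VQ = Sg)
    (hdiag : ∀ (i : Fin m) (j : Fin n), (i : ℕ) ≠ (j : ℕ) → Sg i j = 0)
    (hpos : ∀ j : Fin n, 0 < Sg (Fin.castLE hmn j) j)
    -- `Sd` is the Moore–Penrose pseudoinverse of `Sg`, characterized by the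
    -- four Penrose conditions:
    (Sd : Matrix (Fin n) (Fin m) ℝ)
    (hP1 : Sg * Sd * Sg = Sg) (hP2 : Sd * Sg * Sd = Sd)
    (hP3 : (Sg * Sd)ᵀ = Sg * Sd) (hP4 : (Sd * Sg)ᵀ = Sd * Sg)
    (k : ℕ) (hk : 1 ≤ k) :
    ∀ x ∈ krylov (Aᵀ * R⁻¹ * A * Q + lam ^ 2 • (1 : Matrix (Fin n) (Fin n) ℝ))
        ((Aᵀ * R⁻¹) *ᵥ b) k,
      ∃ P : Polynomial ℝ, P.natDegree ≤ k - 1 ∧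
        μ + Q *ᵥ x
          = μ + (VQ *
              ((Polynomial.aeval (Sgᵀ * Sg + lam ^ 2 • (1 : Matrix (Fin n) (Fin n) ℝ)) P) *
                (Sgᵀ * Sg)) * Sd) *ᵥ ((URᵀ * R⁻¹) *ᵥ b) := by
  have hURd : IsUnit UR.det := (Matrix.isUnit_iff_isUnit_det UR).mp hURu
  have hVQd : IsUnit VQ.det := (Matrix.isUnit_iff_isUnit_det VQ).mp hVQu
  have hVQtd : IsUnit (VQᵀ).det := by rwa [Matrix.det_transpose]
  have hQd : IsUnit Q.det := hQ.det_pos.ne'.isUnit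
  set W := (VQᵀ)⁻¹ with hWdef
  set M := Sgᵀ * Sg + lam ^ 2 • (1 : Matrix (Fin n) (Fin n) ℝ) with hMdef
  have hW1 : VQᵀ * W = 1 := Matrix.mul_nonsing_inv _ hVQtd
  have hW2 : W * VQᵀ = 1 := Matrix.nonsing_inv_mul _ hVQtd
  have hUR1 : UR * UR⁻¹ = 1 := Matrix.mul_nonsing_inv _ hURd
  have hUR2 : UR⁻¹ * UR = 1 := Matrix.nonsing_inv_mul _ hURd
  have hVQ1 : VQ * VQ⁻¹ = 1 := Matrix.mul_nonsing_inv _ hVQd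
  have hVQ2 : VQ⁻¹ * VQ = 1 := Matrix.nonsing_inv_mul _ hVQd
  -- cancellation helpers (right-associated forms)
  have cUR : ∀ {p : ℕ} (X : Matrix (Fin m) (Fin p) ℝ), UR⁻¹ * (UR * X) = X := by
    intro p X; rw [← Matrix.mul_assoc, hUR2, Matrix.one_mul]
  have cUR' : ∀ {p : ℕ} (X : Matrix (Fin m) (Fin p) ℝ), UR * (UR⁻¹ * X) = X := by
    intro p X; rw [← Matrix.mul_assoc, hUR1, Matrix.one_mul]
  have cVQ : ∀ {p : ℕ} (X : Matrix (Fin n) (Fin p) ℝ), VQ⁻¹ * (VQ * X) = X := by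
    intro p X; rw [← Matrix.mul_assoc, hVQ2, Matrix.one_mul]
  have cVQt : ∀ {p : ℕ} (X : Matrix (Fin n) (Fin p) ℝ), VQᵀ * (W * X) = X := by
    intro p X; rw [← Matrix.mul_assoc, hW1, Matrix.one_mul]
  have hgR : URᵀ * R⁻¹ = UR⁻¹ := by
    calc URᵀ * R⁻¹ = URᵀ * R⁻¹ * (UR * UR⁻¹) := by rw [hUR1, mul_one]
      _ = (URᵀ * R⁻¹ * UR) * UR⁻¹ := by simp only [Matrix.mul_assoc]
      _ = UR⁻¹ := by rw [hUR, Matrix.one_mul]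
  have hQ2 : Q = VQ * VQᵀ := by
    have h1 : Q⁻¹ * VQ = W := by
      calc Q⁻¹ * VQ = (W * VQᵀ) * (Q⁻¹ * VQ) := by rw [hW2, one_mul]
        _ = W * (VQᵀ * Q⁻¹ * VQ) := by simp only [Matrix.mul_assoc]
        _ = W := by rw [hVQ, mul_one]
    have hQi : Q⁻¹ = W * VQ⁻¹ := by
      calc Q⁻¹ = Q⁻¹ * (VQ * VQ⁻¹) := by rw [hVQ1, mul_one]
        _ = (Q⁻¹ * VQ) * VQ⁻¹ := by simp only [Matrix.mul_assoc]
        _ = W * VQ⁻¹ := by rw [h1]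
    have h2 : (VQ * VQᵀ) * Q⁻¹ = 1 := by
      rw [hQi]
      calc VQ * VQᵀ * (W * VQ⁻¹) = VQ * (VQᵀ * (W * VQ⁻¹)) := by
            simp only [Matrix.mul_assoc]
        _ = 1 := by rw [cVQt, hVQ1]
    have h3 := Matrix.inv_eq_left_inv h2
    rwa [Matrix.nonsing_inv_nonsing_inv Q hQd] at h3
  have hA : A = UR * Sg * VQ⁻¹ := by
    have h : UR * (UR⁻¹ * A * VQ) * VQ⁻¹ = A := by
      calc UR * (UR⁻¹ * A * VQ) * VQ⁻¹
          = UR * (UR⁻¹ * (A * (VQ * VQ⁻¹))) := by simp only [Matrix.mul_assoc]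
        _ = A := by rw [hVQ1, Matrix.mul_one, cUR']
    rw [← h, hGSVD]
  have hAt : Aᵀ = W * (Sgᵀ * URᵀ) := by
    rw [hA, Matrix.transpose_mul, Matrix.transpose_mul, Matrix.transpose_nonsing_inv,
      ← hWdef]
  have hArR : Aᵀ * R⁻¹ = W * (Sgᵀ * UR⁻¹) := by
    calc Aᵀ * R⁻¹ = W * (Sgᵀ * URᵀ) * R⁻¹ := by rw [hAt]
      _ = W * (Sgᵀ * (URᵀ * R⁻¹)) := by simp only [Matrix.mul_assoc]
      _ = W * (Sgᵀ * UR⁻¹) := by rw [hgR]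
  have hC : Aᵀ * R⁻¹ * A * Q + lam ^ 2 • (1 : Matrix (Fin n) (Fin n) ℝ) = W * M * VQᵀ := by
    have h1 : Aᵀ * R⁻¹ * A * Q = W * (Sgᵀ * Sg) * VQᵀ := by
      rw [hArR, hA, hQ2]
      simp only [Matrix.mul_assoc]
      rw [cUR, cVQ]
    rw [h1, hMdef, Matrix.mul_add, Matrix.add_mul]
    congr 1
    rw [Matrix.mul_smul, Matrix.mul_one, Matrix.smul_mul, hW2]
  have hCpow : ∀ q : ℕ,
      (Aᵀ * R⁻¹ * A * Q + lam ^ 2 • (1 : Matrix (Fin n) (Fin n) ℝ)) ^ q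
        = W * M ^ q * VQᵀ := by
    intro q
    induction q with
    | zero => rw [pow_zero, pow_zero, Matrix.mul_one, hW2]
    | succ q ih =>
        rw [pow_succ, ih, hC, pow_succ]
        simp only [Matrix.mul_assoc]
        rw [cVQt]
  have hSSd : Sgᵀ * Sg * Sd = Sgᵀ := by
    have h := congrArg Matrix.transpose hP1
    rw [Matrix.transpose_mul, hP3, ← Matrix.mul_assoc] at h
    exact h
  have hSSd' : ∀ (X : Matrix (Fin m) (Fin m) ℝ), Sgᵀ * (Sg * (Sd * X)) = Sgᵀ * X := by
    intro X
    calc Sgᵀ * (Sg * (Sd * X)) = (Sgᵀ * Sg * Sd) * X := by simp only [Matrix.mul_assoc]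
      _ = Sgᵀ * X := by rw [hSSd]
  have key : ∀ q : ℕ,
      Q * ((Aᵀ * R⁻¹ * A * Q + lam ^ 2 • (1 : Matrix (Fin n) (Fin n) ℝ)) ^ q) * (Aᵀ * R⁻¹)
        = VQ * (M ^ q * (Sgᵀ * Sg)) * Sd * (URᵀ * R⁻¹) := by
    intro q
    rw [hCpow q, hQ2, hArR, hgR]
    simp only [Matrix.mul_assoc]
    rw [cVQt, cVQt, hSSd']
  -- sum of matrices times a vector
  have hsum : ∀ (f : Fin k → Matrix (Fin n) (Fin m) ℝ),
      (∑ i : Fin k, f i) *ᵥ b = ∑ i : Fin k, f i *ᵥ b := by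
    intro f
    induction (Finset.univ : Finset (Fin k)) using Finset.induction_on with
    | empty => simp [Matrix.zero_mulVec]
    | insert _ _ h ih => rw [Finset.sum_insert h, Finset.sum_insert h, Matrix.add_mulVec, ih]
  intro x hx
  rw [krylov, Submodule.mem_span_range_iff_exists_fun] at hx
  obtain ⟨c, hc⟩ := hx
  refine ⟨∑ i : Fin k, Polynomial.C (c i) * Polynomial.X ^ (i : ℕ), ?_, ?_⟩
  · apply Polynomial.natDegree_sum_le_of_forall_le
    intro i _
    refine (Polynomial.natDegree_C_mul_le _ _).trans ?_
    rw [Polynomial.natDegree_X_pow]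
    have := i.isLt
    omega
  · congr 1
    have hPa : Polynomial.aeval M (∑ i : Fin k, Polynomial.C (c i) * Polynomial.X ^ (i : ℕ))
        = ∑ i : Fin k, c i • M ^ (i : ℕ) := by
      simp [map_sum, _root_.map_mul, map_pow, Polynomial.aeval_C, Polynomial.aeval_X,
        Algebra.algebraMap_eq_smul_one, smul_mul_assoc]
    rw [hPa]
    have hL : Q *ᵥ x
        = ∑ i : Fin k,
            c i • ((Q * ((Aᵀ * R⁻¹ * A * Q + lam ^ 2 • (1 : Matrix (Fin n) (Fin n) ℝ)) ^ (i : ℕ))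
              * (Aᵀ * R⁻¹)) *ᵥ b) := by
      rw [← hc]
      simp only [← Matrix.mulVecLin_apply, map_sum, _root_.map_smul]
      simp only [Matrix.mulVecLin_apply, Matrix.mulVec_mulVec, Matrix.mul_assoc]
    rw [hL]
    have hR2 : (VQ * ((∑ i : Fin k, c i • M ^ (i : ℕ)) * (Sgᵀ * Sg)) * Sd) *ᵥ
          ((URᵀ * R⁻¹) *ᵥ b)
        = ∑ i : Fin k, c i • ((VQ * (M ^ (i : ℕ) * (Sgᵀ * Sg)) * Sd * (URᵀ * R⁻¹)) *ᵥ b) := by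
      rw [Matrix.mulVec_mulVec]
      have : VQ * ((∑ i : Fin k, c i • M ^ (i : ℕ)) * (Sgᵀ * Sg)) * Sd * (URᵀ * R⁻¹)
          = ∑ i : Fin k, c i • (VQ * (M ^ (i : ℕ) * (Sgᵀ * Sg)) * Sd * (URᵀ * R⁻¹)) := by
        simp [Matrix.sum_mul, Matrix.mul_sum, Matrix.smul_mul, Matrix.mul_smul, Matrix.mul_assoc]
      rw [this, hsum]
      simp [Matrix.smul_mulVec]
    rw [hR2]
    refine Finset.sum_congr rfl fun i _ => ?_
    rw [key]
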